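/- Let B = (b_{ij}) be an n×n integer skew-symmetrizable matrix with adjacency matrix A = ([b_{ij}]_+), and let I ⊆ {1,…,n} be nonempty. If the principal submatrix of A with rows and columns indexed by I has nonzero determinant, then there exists a nonempty subset S ⊆ I such that the full subquiver of Q(B) on S is a (chordless oriented) cycle: S can be enumerated as j_1, …, j_m with m ≥ 3 so that b_{j_s j_{s+1}} > 0 for 1 ≤ s ≤ m−1, b_{j_m j_1} > 0, and b_{j_s j_t} = 0 for every pair s < t that is not cyclically adjacent. -/

import Mathlib

def SkewSymmetrizable {n : ℕ} (B : Matrix (Fin n) (Fin n) ℤ) : Prop :=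
  ∃ d : Fin n → ℤ, (∀ i, 0 < d i) ∧ ∀ i j, d i * B i j = - (d j * B j i)

/-- A cyclic sequence of length `m+2` of distinct vertices of `I` with positive
forward entries of `B`. -/
def CycleP {n : ℕ} (B : Matrix (Fin n) (Fin n) ℤ) (I : Finset (Fin n)) (m : ℕ) : Prop :=
  ∃ f : Fin (m + 2) → Fin n, Function.Injective f ∧ (∀ s, f s ∈ I) ∧
    ∀ s, 0 < B (f s) (f (s + 1))

lemma mk_cycle {n : ℕ} (B : Matrix (Fin n) (Fin n) ℤ) (I : Finset (Fin n))
    {k : ℕ} (hk : 2 ≤ k) (f : Fin k → Fin n) (hinj : Function.Injective f)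
    (hIf : ∀ s, f s ∈ I)
    (harr : ∀ s : Fin k, 0 < B (f s) (f ⟨(s.val + 1) % k, Nat.mod_lt _ (by omega)⟩)) :
    ∃ m, m + 2 = k ∧ CycleP B I m := by
  obtain ⟨m, rfl⟩ : ∃ m, k = m + 2 := ⟨k - 2, by omega⟩
  refine ⟨m, rfl, f, hinj, hIf, fun s => ?_⟩
  have h := harr s
  have he : (s + 1 : Fin (m + 2)) = ⟨(s.val + 1) % (m + 2), Nat.mod_lt _ (by omega)⟩ :=
    Fin.ext (by simp [Fin.add_def])
  rw [← he] at h
  exact h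

lemma chord {n : ℕ} (B : Matrix (Fin n) (Fin n) ℤ) (I : Finset (Fin n)) {m : ℕ}
    (f : Fin (m + 2) → Fin n) (hinj : Function.Injective f) (hIf : ∀ s, f s ∈ I)
    (harr : ∀ s, 0 < B (f s) (f (s + 1)))
    (a b : Fin (m + 2)) (hab : 0 < B (f a) (f b))
    (h1 : b ≠ a) (h2 : b ≠ a + 1) :
    ∃ m', m' < m ∧ CycleP B I m' := by
  have hne : a - b ≠ 0 := sub_ne_zero.mpr (Ne.symm h1)
  have hlow : 1 ≤ (a - b).val := by
    rcases Nat.eq_zero_or_pos (a - b).val with h | h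
    · exact absurd (Fin.ext h) hne
    · exact h
  have hup : (a - b).val ≤ m := by
    by_contra hlt
    push_neg at hlt
    have hv : (a - b).val = m + 1 := by
      have := (a - b).isLt; omega
    have hc : a - b = (⟨m + 1, by omega⟩ : Fin (m + 2)) := Fin.ext hv
    have ha : a = (⟨m + 1, by omega⟩ : Fin (m + 2)) + b := by
      rw [← hc]; exact (sub_add_cancel a b).symm
    have hzero : ((⟨m + 1, by omega⟩ : Fin (m + 2)) + 1) = 0 := by
      apply Fin.ext
      simp [Fin.add_def, Nat.mod_self]
    have : a + 1 = b := by
      rw [ha, add_comm (⟨m + 1, by omega⟩ : Fin (m + 2)) b, add_assoc, hzero, add_zero]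
    exact h2 this.symm
  set k : ℕ := (a - b).val + 1 with hkdef
  have hk2 : 2 ≤ k := by omega
  have hkle : k ≤ m + 2 := by omega
  set g : Fin k → Fin n := fun j => f (b + Fin.castLE hkle j) with hg
  have ginj : Function.Injective g := by
    intro j j' hjj
    have := hinj hjj
    have := add_left_cancel this
    exact Fin.castLE_injective hkle this
  have gI : ∀ s, g s ∈ I := fun s => hIf _
  have garr : ∀ j : Fin k, 0 < B (g j) (g ⟨(j.val + 1) % k, Nat.mod_lt _ (by omega)⟩) := by
    intro j
    by_cases hj : j.val + 1 < k
    · have he : b + Fin.castLE hkle (⟨(j.val + 1) % k, Nat.mod_lt _ (by omega)⟩ : Fin k)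
          = (b + Fin.castLE hkle j) + 1 := by
        apply Fin.ext
        simp only [Fin.add_def, Fin.coe_castLE, Fin.val_one, Nat.mod_eq_of_lt hj]
        rw [Nat.mod_add_mod]
        congr 1
      have h := harr (b + Fin.castLE hkle j)
      have hgeq : g ⟨(j.val + 1) % k, Nat.mod_lt _ (by omega)⟩
          = f ((b + Fin.castLE hkle j) + 1) := by
        simp only [hg]
        rw [he]
      have hgj : g j = f (b + Fin.castLE hkle j) := rfl
      rw [hgj, hgeq]
      exact h
    · have hjk : j.val + 1 = k := by have := j.isLt; omega
      have hmod : (j.val + 1) % k = 0 := by rw [hjk]; exact Nat.mod_self k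
      have he0 : g ⟨(j.val + 1) % k, Nat.mod_lt _ (by omega)⟩ = f b := by
        simp only [hg]
        congr 1
        apply Fin.ext
        simp [Fin.add_def, hmod]
      have hej : g j = f a := by
        simp only [hg]
        congr 1
        have hcj : Fin.castLE hkle j = a - b := by
          apply Fin.ext
          simp only [Fin.coe_castLE]
          omega
        rw [hcj, add_comm b (a - b)]
        exact sub_add_cancel a b
      rw [he0, hej]
      exact hab
  obtain ⟨m', hm'k, hc⟩ := mk_cycle B I hk2 g ginj gI garr
  exact ⟨m', by omega, hc⟩

lemma exists_cycle {n : ℕ} (B : Matrix (Fin n) (Fin n) ℤ) (I : Finset (Fin n))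
    (hdiag : ∀ i, B i i = 0) (hI : I.Nonempty)
    (hdet : Matrix.det (Matrix.of fun i j : I => max (B (i : Fin n) (j : Fin n)) 0) ≠ 0) :
    ∃ m, CycleP B I m := by
  classical
  obtain ⟨σ, hσ⟩ : ∃ σ : Equiv.Perm I,
      (∏ i : I, (Matrix.of fun i j : I => max (B (i : Fin n) (j : Fin n)) 0) (σ i) i) ≠ 0 := by
    by_contra h
    push_neg at h
    apply hdet
    rw [Matrix.det_apply]
    exact Finset.sum_eq_zero fun σ _ => by rw [h σ, smul_zero]
  have hσpos : ∀ i : I, 0 < B ((σ i : Fin n)) (i : Fin n) := by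
    intro i
    have h := Finset.prod_ne_zero_iff.mp hσ i (Finset.mem_univ i)
    simp only [Matrix.of_apply] at h
    by_contra hle
    push_neg at hle
    exact h (max_eq_right hle)
  set τ : Equiv.Perm I := σ⁻¹ with hτ
  have hτpos : ∀ x : I, 0 < B (x : Fin n) ((τ x : Fin n)) := by
    intro x
    have := hσpos (τ x)
    rwa [show σ (τ x) = x from Equiv.apply_symm_apply σ x] at this
  obtain ⟨i₀, hi₀⟩ := hI
  set x₀ : I := ⟨i₀, hi₀⟩ with hx₀
  have hper : Function.IsPeriodicPt ⇑τ (orderOf τ) x₀ := by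
    unfold Function.IsPeriodicPt Function.IsFixedPt
    rw [Equiv.Perm.iterate_eq_pow, pow_orderOf_eq_one]
    rfl
  set k : ℕ := Function.minimalPeriod ⇑τ x₀ with hk
  have hk0 : 0 < k := hper.minimalPeriod_pos (orderOf_pos τ)
  have hk1 : k ≠ 1 := by
    intro h
    have hfix : τ x₀ = x₀ := by
      have := Function.iterate_minimalPeriod (f := ⇑τ) (x := x₀)
      rw [← hk, h] at this
      simpa using this
    have := hτpos x₀
    rw [hfix, hdiag] at this
    exact lt_irrefl 0 this
  have hk2 : 2 ≤ k := by omega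
  set f : Fin k → Fin n := fun s => ((τ^[s.val] x₀ : I) : Fin n) with hf
  have finj : Function.Injective f := by
    intro s t hst
    have h' : (τ^[s.val] x₀ : I) = τ^[t.val] x₀ := Subtype.coe_injective hst
    have := Function.iterate_injOn_Iio_minimalPeriod (f := ⇑τ) (x := x₀)
      (Set.mem_Iio.mpr s.isLt) (Set.mem_Iio.mpr t.isLt) h'
    exact Fin.ext this
  have fI : ∀ s, f s ∈ I := fun s => (τ^[s.val] x₀ : I).2
  have farr : ∀ s : Fin k, 0 < B (f s) (f ⟨(s.val + 1) % k, Nat.mod_lt _ (by omega)⟩) := by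
    intro s
    have he : f ⟨(s.val + 1) % k, Nat.mod_lt _ (by omega)⟩
        = ((τ (τ^[s.val] x₀) : I) : Fin n) := by
      simp only [hf]
      congr 1
      rw [Function.iterate_mod_minimalPeriod_eq, Function.iterate_succ_apply']
    rw [he]
    exact hτpos _
  obtain ⟨m, _, hc⟩ := mk_cycle B I hk2 f finj fI farr
  exact ⟨m, hc⟩

theorem stmt1 {n : ℕ} (B : Matrix (Fin n) (Fin n) ℤ) (hB : SkewSymmetrizable B)
    (I : Finset (Fin n)) (hI : I.Nonempty)
    (hdet : Matrix.det (Matrix.of fun i j : I => max (B (i : Fin n) (j : Fin n)) 0) ≠ 0) :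
    ∃ (m : ℕ) (f : Fin (m + 3) → Fin n),
      Function.Injective f ∧
      (∀ s, f s ∈ I) ∧
      (∀ s : Fin (m + 3), 0 < B (f s) (f (s + 1))) ∧
      (∀ s t : Fin (m + 3), t ≠ s → t ≠ s + 1 → s ≠ t + 1 → B (f s) (f t) = 0) := by
  classical
  obtain ⟨d, hd, hsk⟩ := hB
  have hdiag : ∀ i, B i i = 0 := by
    intro i
    have h := hsk i i
    have hz : d i * B i i = 0 := by linarith
    rcases mul_eq_zero.mp hz with h' | h'
    · exact absurd h' (hd i).ne'
    · exact h'
  have hnotboth : ∀ i j, 0 < B i j → 0 < B j i → False := by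
    intro i j h1 h2
    have h := hsk i j
    nlinarith [mul_pos (hd i) h1, mul_pos (hd j) h2]
  have hex : ∃ m, CycleP B I m := exists_cycle B I hdiag hI hdet
  obtain ⟨m₀, hcyc, hmin⟩ : ∃ m₀, CycleP B I m₀ ∧ ∀ m', m' < m₀ → ¬ CycleP B I m' :=
    ⟨Nat.find hex, Nat.find_spec hex, fun m' h => Nat.find_min hex h⟩
  have hm₀ : m₀ ≠ 0 := by
    rintro rfl
    obtain ⟨f, hinj, hIf, harr⟩ := hcyc
    have h0 := harr 0
    have h1 := harr 1
    have e0 : (0 + 1 : Fin 2) = 1 := by decide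
    have e1 : (1 + 1 : Fin 2) = 0 := by decide
    rw [e0] at h0
    rw [e1] at h1
    exact hnotboth _ _ h0 h1
  obtain ⟨t, rfl⟩ : ∃ t, m₀ = t + 1 := ⟨m₀ - 1, by omega⟩
  obtain ⟨f, hinj, hIf, harr⟩ := hcyc
  refine ⟨t, f, hinj, hIf, harr, ?_⟩
  intro s u hus hus1 hsu1
  by_contra hne
  rcases lt_or_gt_of_ne hne with hlt | hgt
  · have hpos : 0 < B (f u) (f s) := by
      have h := hsk (f s) (f u)
      nlinarith [mul_pos (hd (f s)) (neg_pos.mpr hlt), hd (f u)]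
    obtain ⟨m', hm', hc⟩ := chord B I f hinj hIf harr u s hpos (Ne.symm hus) hsu1
    exact hmin m' hm' hc
  · obtain ⟨m', hm', hc⟩ := chord B I f hinj hIf harr s u hgt hus hus1
    exact hmin m' hm' hc
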